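/- arXiv:1912.10925 — 2 statements merged into one kernel-verified Lean document; each statement's English description precedes it below -/
import Mathlib

section
/- Let V be a finite-dimensional real inner product space and let (H_i)_{i∈I} be a finite family of closed half-spaces H_i = {ξ : ⟨ξ, γ_i⟩ ≥ c_i} with γ_i ≠ 0. Set Δ = ⋂_{i∈I} H_i and assume Δ ≠ ∅. Let I⁰ = {i ∈ I : the hyperplane {ξ : ⟨ξ, γ_i⟩ = c_i} meets Δ}. Then ⋂_{i∈I⁰} H_i = Δ. -/
open scoped RealInnerProductSpace

/-- Half-spaces whose boundary hyperplane does not meet the intersection `Δ` of a finite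
family of closed half-spaces are redundant. -/
theorem stmt2 {V : Type*} [NormedAddCommGroup V] [InnerProductSpace ℝ V]
    [FiniteDimensional ℝ V] {I : Type*} [Fintype I]
    (γ : I → V) (c : I → ℝ) (hγ : ∀ i, γ i ≠ 0)
    (H : I → Set V) (hH : ∀ i, H i = {ξ : V | c i ≤ ⟪ξ, γ i⟫})
    (Δ : Set V) (hΔ : Δ = ⋂ i, H i) (hΔne : Δ.Nonempty) :
    (⋂ i ∈ {i : I | ∃ ξ ∈ Δ, ⟪ξ, γ i⟫ = c i}, H i) = Δ := by
  apply Set.Subset.antisymm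
  · intro ξ hξ
    by_contra hξΔ
    obtain ⟨x₀, hx₀⟩ := hΔne
    set a : I → ℝ := fun i => ⟪x₀, γ i⟫ - c i with ha
    set b : I → ℝ := fun i => ⟪ξ, γ i⟫ - c i with hb
    have hai : ∀ i, 0 ≤ a i := by
      intro i
      have h1 : x₀ ∈ H i := by
        rw [hΔ] at hx₀; exact Set.mem_iInter.mp hx₀ i
      rw [hH i] at h1
      simp only [Set.mem_setOf_eq] at h1
      simp only [ha]; linarith
    have hS : ∃ i, b i < 0 := by
      by_contra h
      push_neg at h
      apply hξΔ
      rw [hΔ, Set.mem_iInter]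
      intro i; rw [hH i]
      have := h i
      simp only [hb] at this
      simp only [Set.mem_setOf_eq]; linarith
    set t : I → ℝ := fun i => a i / (a i - b i) with ht
    set S : Finset I := Finset.univ.filter (fun i => b i < 0) with hSdef
    have hSne : S.Nonempty := ⟨hS.choose, by simp [hSdef, hS.choose_spec]⟩
    obtain ⟨j, hjS, hjmin⟩ := S.exists_min_image t hSne
    have hbj : b j < 0 := by simpa [hSdef] using hjS
    have hdenj : 0 < a j - b j := by linarith [hai j]
    have htj0 : 0 ≤ t j := div_nonneg (hai j) hdenj.le
    have htj1 : t j < 1 := by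
      simp only [ht]
      rw [div_lt_one hdenj]; linarith
    set p : V := x₀ + t j • (ξ - x₀) with hp
    have hinner : ∀ i, ⟪p, γ i⟫ - c i = (1 - t j) * a i + t j * b i := by
      intro i
      simp only [hp, inner_add_left, inner_sub_left, real_inner_smul_left, ha, hb]
      ring
    have hpΔ : p ∈ Δ := by
      rw [hΔ, Set.mem_iInter]; intro i
      rw [hH i]
      have key : 0 ≤ ⟪p, γ i⟫ - c i := by
        rw [hinner i]
        by_cases hbi : b i < 0
        · have hiS : i ∈ S := by simp [hSdef, hbi]
          have hti : t j ≤ t i := hjmin i hiS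
          have hden : 0 < a i - b i := by linarith [hai i]
          have h1 : t j * (a i - b i) ≤ a i := by
            rw [← le_div_iff₀ hden]
            exact hti.trans_eq (by simp [ht])
          nlinarith
        · push_neg at hbi
          nlinarith [hai i, htj0, htj1.le]
      simp only [Set.mem_setOf_eq]; linarith
    have htjval : t j * (a j - b j) = a j := by
      simp only [ht]; field_simp
    have hbound : ⟪p, γ j⟫ = c j := by
      have h2 := hinner j
      nlinarith [htjval, h2]
    have hjI0 : j ∈ {i : I | ∃ ξ ∈ Δ, ⟪ξ, γ i⟫ = c i} := ⟨p, hpΔ, hbound⟩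
    have h3 := Set.mem_iInter₂.mp hξ j hjI0
    rw [hH j] at h3
    simp only [Set.mem_setOf_eq] at h3
    simp only [hb] at hbj
    linarith
  · intro ξ hξ
    rw [hΔ] at hξ
    rw [hΔ]
    exact Set.mem_iInter₂.2 fun i _ => Set.mem_iInter.mp hξ i
end

section
/- Let V be a finite-dimensional real inner product space, Δ₀ and Δ ⊆ V with Δ closed, ξ₀ ∈ Δ₀, ξ₁ ∈ Δ ⊆ Δ₀, and suppose that Δ₀ and Δ are intersections of closed half-spaces H_i = {ξ : ⟨ξ, γ_i⟩ ≥ c_i}, i ∈ I, where Δ = ⋂_{i∈I} H_i and Δ₀ = ⋂_{i∈I⁰} H_i with I⁰ = {i : ∂H_i ∩ Δ ≠ ∅}. Then the point ξ_t = tξ₁ + (1−t)ξ₀ lies in Δ for all t ∈ [0,1]; in particular ξ₀ ∈ Δ. -/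
open scoped RealInnerProductSpace

/-- Let `Δ = ⋂ i, H i` be a nonempty intersection of finitely many closed half-spaces and
`Δ₀` the intersection of those `H i` whose boundary hyperplane meets `Δ`.  If `ξ₀ ∈ Δ₀` and
`ξ₁ ∈ Δ`, then the whole segment `ξ_t = t•ξ₁ + (1-t)•ξ₀` lies in `Δ`; in particular
`ξ₀ ∈ Δ`. -/
theorem stmt3 {V : Type*} [NormedAddCommGroup V] [InnerProductSpace ℝ V]
    [FiniteDimensional ℝ V] {I : Type*} [Fintype I]
    (γ : I → V) (c : I → ℝ) (hγ : ∀ i, γ i ≠ 0)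
    (H : I → Set V) (hH : ∀ i, H i = {ξ : V | c i ≤ ⟪ξ, γ i⟫})
    (Δ Δ₀ : Set V) (hΔ : Δ = ⋂ i, H i)
    (hΔ₀ : Δ₀ = ⋂ i ∈ {i : I | ∃ ξ ∈ Δ, ⟪ξ, γ i⟫ = c i}, H i)
    (hΔne : Δ.Nonempty)
    (ξ₀ ξ₁ : V) (hξ₀ : ξ₀ ∈ Δ₀) (hξ₁ : ξ₁ ∈ Δ) :
    (∀ t ∈ Set.Icc (0:ℝ) 1, t • ξ₁ + (1 - t) • ξ₀ ∈ Δ) ∧ ξ₀ ∈ Δ := by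
  classical
  set a : I → ℝ := fun i => ⟪ξ₁, γ i⟫ with ha
  set b : I → ℝ := fun i => ⟪ξ₀, γ i⟫ with hb
  have hai : ∀ i, c i ≤ a i := by
    intro i
    have h := hξ₁
    rw [hΔ] at h
    have h2 := Set.mem_iInter.1 h i
    rw [hH i] at h2
    exact h2
  have key : ξ₀ ∈ Δ := by
    by_contra hne
    obtain ⟨j, hj⟩ : ∃ j, b j < c j := by
      by_contra h
      push_neg at h
      apply hne
      rw [hΔ]
      exact Set.mem_iInter.2 fun i => by rw [hH i]; exact h i
    set J : Finset I := Finset.univ.filter (fun i => b i < c i) with hJ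
    have hjJ : j ∈ J := Finset.mem_filter.2 ⟨Finset.mem_univ _, hj⟩
    set τ : I → ℝ := fun i => (a i - c i) / (a i - b i) with hτ
    obtain ⟨i₀, hi₀J, hi₀min⟩ := J.exists_min_image τ ⟨j, hjJ⟩
    have hbi₀ : b i₀ < c i₀ := (Finset.mem_filter.1 hi₀J).2
    have hden : 0 < a i₀ - b i₀ := by have := hai i₀; linarith
    have ht0 : 0 ≤ τ i₀ := div_nonneg (by have := hai i₀; linarith) hden.le
    have ht1 : τ i₀ < 1 := (div_lt_one hden).2 (by linarith)
    set ξ' : V := (1 - τ i₀) • ξ₁ + τ i₀ • ξ₀ with hξ'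
    have hinner : ∀ i, ⟪ξ', γ i⟫ = (1 - τ i₀) * a i + τ i₀ * b i := by
      intro i
      simp [hξ', inner_add_left, real_inner_smul_left, ha, hb]
    have hξ'Δ : ξ' ∈ Δ := by
      rw [hΔ]
      refine Set.mem_iInter.2 fun i => ?_
      rw [hH i]
      show c i ≤ ⟪ξ', γ i⟫
      rw [hinner i]
      by_cases hiJ : i ∈ J
      · have hbi : b i < c i := (Finset.mem_filter.1 hiJ).2
        have hdi : 0 < a i - b i := by have := hai i; linarith
        have hτi : τ i₀ ≤ τ i := hi₀min i hiJ
        have h1 : τ i₀ * (a i - b i) ≤ a i - c i := by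
          rw [← le_div_iff₀ hdi]
          exact hτi
        linarith
      · have hbi : c i ≤ b i := by
          by_contra h
          exact hiJ (Finset.mem_filter.2 ⟨Finset.mem_univ _, not_le.1 h⟩)
        have := hai i
        nlinarith
    have heq : ⟪ξ', γ i₀⟫ = c i₀ := by
      rw [hinner i₀, hτ]
      field_simp
      ring
    have hmem : i₀ ∈ {i : I | ∃ ξ ∈ Δ, ⟪ξ, γ i⟫ = c i} := ⟨ξ', hξ'Δ, heq⟩
    have hξ₀H : ξ₀ ∈ H i₀ := by
      rw [hΔ₀] at hξ₀
      exact Set.mem_iInter₂.1 hξ₀ i₀ hmem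
    rw [hH i₀] at hξ₀H
    exact absurd hξ₀H (not_le.2 hbi₀)
  have hbi : ∀ i, c i ≤ b i := by
    intro i
    have h := key
    rw [hΔ] at h
    have h2 := Set.mem_iInter.1 h i
    rw [hH i] at h2
    exact h2
  refine ⟨fun t ht => ?_, key⟩
  rw [hΔ]
  refine Set.mem_iInter.2 fun i => ?_
  rw [hH i]
  show c i ≤ ⟪t • ξ₁ + (1 - t) • ξ₀, γ i⟫
  have : ⟪t • ξ₁ + (1 - t) • ξ₀, γ i⟫ = t * a i + (1 - t) * b i := by
    simp [inner_add_left, real_inner_smul_left, ha, hb]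
  rw [this]
  obtain ⟨ht0, ht1⟩ := ht
  nlinarith [hai i, hbi i]
end
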